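/- For every integer M ≥ 2 and every γ > 0, the function f_M is differentiable on ℝ and satisfies f_M'(x) = -(x/(2(M-1))) · f_{M-1}(x) for all real x. -/

import Mathlib

open Finset

/-- For an integer `M ≥ 1` and real `γ > 0`, the function
`f_M(x) = (π/(γ^{2M-1} 2^{M-1} (M-1)!)) · e^{-γ|x|} ·
  ∑_{l=0}^{M-1} ((M-1+l)!/(l!(M-1-l)! 2^l)) |γx|^{M-1-l}`. -/
noncomputable def fM (γ : ℝ) (M : ℕ) (x : ℝ) : ℝ :=
  Real.pi / (γ ^ (2 * M - 1) * 2 ^ (M - 1) * (Nat.factorial (M - 1))) *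
    Real.exp (-γ * |x|) *
    ∑ l ∈ Finset.range M,
      ((Nat.factorial (M - 1 + l) : ℝ) /
        ((Nat.factorial l : ℝ) * (Nat.factorial (M - 1 - l) : ℝ) * 2 ^ l)) *
      |γ * x| ^ (M - 1 - l)

/-- Coefficients appearing in `fM`. -/
noncomputable def Acoef (m l : ℕ) : ℝ :=
  (Nat.factorial (m + l) : ℝ) / ((Nat.factorial l : ℝ) * (Nat.factorial (m - l) : ℝ) * 2 ^ l)

lemma fac_ne (k : ℕ) : ((Nat.factorial k : ℝ)) ≠ 0 := by
  exact_mod_cast (Nat.factorial_pos k).ne'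

lemma Acoef_zero (m : ℕ) : Acoef m 0 = 1 := by
  simp [Acoef, div_self (fac_ne _)]

lemma Acoef_top (n : ℕ) : Acoef (n + 1) (n + 1) = Acoef (n + 1) n := by
  unfold Acoef
  have h1 : n + 1 - (n + 1) = 0 := by omega
  have h2 : n + 1 - n = 1 := by omega
  have h3 : n + 1 + (n + 1) = (n + 1 + n) + 1 := by omega
  rw [h1, h2, h3, Nat.factorial_succ, Nat.factorial_succ n]
  push_cast
  field_simp
  ring

lemma Acoef_rec (l k : ℕ) :
    Acoef (l + k + 2) (l + 1)
      = Acoef (l + k + 2) l * ((k : ℝ) + 2) + Acoef (l + k + 1) (l + 1) := by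
  unfold Acoef
  have h1 : l + k + 2 - (l + 1) = k + 1 := by omega
  have h2 : l + k + 2 - l = k + 2 := by omega
  have h3 : l + k + 1 - (l + 1) = k := by omega
  have h4 : l + k + 2 + (l + 1) = (l + k + 2 + l) + 1 := by omega
  have h5 : l + k + 1 + (l + 1) = l + k + 2 + l := by omega
  rw [h1, h2, h3, h4, h5, Nat.factorial_succ]
  rw [show k + 2 = (k+1) + 1 from rfl, Nat.factorial_succ (k+1), Nat.factorial_succ k,
    Nat.factorial_succ l]
  push_cast
  field_simp
  ring

lemma key (n : ℕ) (t : ℝ) :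
    (∑ l ∈ range (n + 2), Acoef (n + 1) l * t ^ (n + 1 - l))
      = (∑ l ∈ range (n + 2),
          Acoef (n + 1) l * (((n + 1 - l : ℕ) : ℝ) * t ^ (n + 1 - l - 1)))
        + t * ∑ l ∈ range (n + 1), Acoef n l * t ^ (n - l) := by
  rw [Finset.sum_range_succ' (fun l => Acoef (n + 1) l * t ^ (n + 1 - l)) (n + 1)]
  rw [Finset.sum_range_succ
    (fun l => Acoef (n + 1) l * (((n + 1 - l : ℕ) : ℝ) * t ^ (n + 1 - l - 1))) (n + 1)]
  rw [Finset.mul_sum]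
  have h2 : ∑ l ∈ range (n + 1), t * (Acoef n l * t ^ (n - l))
      = ∑ l ∈ range (n + 1), Acoef n l * t ^ (n + 1 - l) := by
    refine Finset.sum_congr rfl fun l hl => ?_
    have hln : l ≤ n := by simpa [Nat.lt_succ_iff] using hl
    rw [show n + 1 - l = (n - l) + 1 by omega, pow_succ]
    ring
  rw [h2, Finset.sum_range_succ' (fun l => Acoef n l * t ^ (n + 1 - l)) n]
  simp only [Nat.sub_self, Nat.cast_zero, zero_mul, mul_zero, add_zero, Nat.sub_zero,
    Acoef_zero, one_mul]
  rw [Finset.sum_range_succ (fun l => Acoef (n + 1) (l + 1) * t ^ (n + 1 - (l + 1)))]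
  rw [Finset.sum_range_succ (fun l => Acoef (n + 1) l * (((n + 1 - l : ℕ) : ℝ) * t ^ (n + 1 - l - 1)))]
  have hmain : ∑ l ∈ range n, Acoef (n + 1) (l + 1) * t ^ (n + 1 - (l + 1))
      = ∑ l ∈ range n, (Acoef (n + 1) l * (((n + 1 - l : ℕ) : ℝ) * t ^ (n + 1 - l - 1))
          + Acoef n (l + 1) * t ^ (n + 1 - (l + 1))) := by
    refine Finset.sum_congr rfl fun l hl => ?_
    have hln : l < n := Finset.mem_range.mp hl
    obtain ⟨k, hk⟩ : ∃ k, n = l + k + 1 := ⟨n - l - 1, by omega⟩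
    subst hk
    have e1 : l + k + 1 + 1 - (l + 1) = k + 1 := by omega
    have e2 : l + k + 1 + 1 - l = k + 2 := by omega
    rw [e1, e2, show k + 2 - 1 = k + 1 from rfl, show l + k + 1 + 1 = l + k + 2 from rfl,
      Acoef_rec l k]
    push_cast
    ring
  rw [hmain, Finset.sum_add_distrib]
  have efin : n + 1 - (n + 1) = 0 := by omega
  have efin2 : n + 1 - n = 1 := by omega
  rw [efin, efin2, Acoef_top]
  push_cast
  ring

lemma g_hasDeriv (n : ℕ) (γ c : ℝ) (u : ℝ) :
    HasDerivAt
      (fun u : ℝ => c * Real.exp (-γ * u) *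
        ∑ l ∈ range (n + 2), Acoef (n + 1) l * (γ * u) ^ (n + 1 - l))
      (-(c * γ ^ 2 * u * Real.exp (-γ * u) *
          ∑ l ∈ range (n + 1), Acoef n l * (γ * u) ^ (n - l))) u := by
  have hE : HasDerivAt (fun u : ℝ => Real.exp (-γ * u)) (Real.exp (-γ * u) * (-γ * 1)) u :=
    ((hasDerivAt_id u).const_mul (-γ)).exp
  have hS : HasDerivAt
      (fun u : ℝ => ∑ l ∈ range (n + 2), Acoef (n + 1) l * (γ * u) ^ (n + 1 - l))
      (∑ l ∈ range (n + 2),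
        Acoef (n + 1) l * (((n + 1 - l : ℕ) : ℝ) * (γ * u) ^ (n + 1 - l - 1) * (γ * 1))) u := by
    refine HasDerivAt.fun_sum fun l _ => ?_
    exact (((hasDerivAt_id u).const_mul γ).pow (n + 1 - l)).const_mul (Acoef (n + 1) l)
  have h := (hE.const_mul c).mul hS
  convert h using 1
  · rfl
  · rfl
  · rfl
  have hs : ∑ l ∈ range (n + 2),
        Acoef (n + 1) l * (((n + 1 - l : ℕ) : ℝ) * (γ * u) ^ (n + 1 - l - 1) * (γ * 1))
      = γ * ∑ l ∈ range (n + 2),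
        Acoef (n + 1) l * (((n + 1 - l : ℕ) : ℝ) * (γ * u) ^ (n + 1 - l - 1)) := by
    rw [Finset.mul_sum]; exact Finset.sum_congr rfl fun l _ => by ring
  rw [hs]
  have hk := key n (γ * u)
  linear_combination (c * Real.exp (-γ * u) * γ) * hk

lemma fM_eq (γ : ℝ) (hγ : 0 < γ) (m : ℕ) (x : ℝ) :
    fM γ (m + 1) x
      = Real.pi / (γ ^ (2 * m + 1) * 2 ^ m * (Nat.factorial m : ℝ)) *
          Real.exp (-γ * |x|) *
          ∑ l ∈ range (m + 1), Acoef m l * (γ * |x|) ^ (m - l) := by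
  unfold fM Acoef
  rw [show 2 * (m + 1) - 1 = 2 * m + 1 by omega, show m + 1 - 1 = m from rfl,
    abs_mul, abs_of_pos hγ]

/-- For every integer `M ≥ 2` and every `γ > 0`, the function `f_M`
is differentiable on `ℝ` and `f_M'(x) = -(x/(2(M-1))) · f_{M-1}(x)` for all real `x`. -/
theorem fM_differentiable_and_deriv (M : ℕ) (hM : 2 ≤ M) (γ : ℝ) (hγ : 0 < γ) :
    Differentiable ℝ (fM γ M) ∧
      ∀ x : ℝ, deriv (fM γ M) x = -(x / (2 * ((M : ℝ) - 1))) * fM γ (M - 1) x := by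
  obtain ⟨n, rfl⟩ : ∃ n, M = n + 2 := ⟨M - 2, by omega⟩
  set c : ℝ := Real.pi / (γ ^ (2 * (n + 1) + 1) * 2 ^ (n + 1) * (Nat.factorial (n + 1) : ℝ)) with hc
  set g : ℝ → ℝ :=
    fun u => c * Real.exp (-γ * u) * ∑ l ∈ range (n + 2), Acoef (n + 1) l * (γ * u) ^ (n + 1 - l)
    with hg
  have habs : ∀ y : ℝ, fM γ (n + 2) y = g (|y|) := fun y => fM_eq γ hγ (n + 1) y
  have hcc : Real.pi / (γ ^ (2 * n + 1) * 2 ^ n * (Nat.factorial n : ℝ))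
      = c * γ ^ 2 * (2 * ((n : ℝ) + 1)) := by
    rw [hc, Nat.factorial_succ]
    rw [show 2 * (n + 1) + 1 = (2 * n + 1) + 2 by omega, pow_add, pow_succ]
    field_simp
    push_cast
    ring
  have hn1 : ((n : ℝ) + 1) ≠ 0 := by positivity
  have hB : ∀ x : ℝ, -(x / (2 * ((((n : ℕ) + 2 : ℕ) : ℝ) - 1))) * fM γ (n + 2 - 1) x
      = -(c * γ ^ 2 * x * Real.exp (-γ * |x|) *
          ∑ l ∈ range (n + 1), Acoef n l * (γ * |x|) ^ (n - l)) := by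
    intro x
    rw [show (n + 2 - 1 : ℕ) = n + 1 from rfl, fM_eq γ hγ n x, hcc]
    set S := ∑ l ∈ range (n + 1), Acoef n l * (γ * |x|) ^ (n - l) with hS
    set E := Real.exp (-γ * |x|) with hE
    push_cast
    rw [show ((n : ℝ) + 2 - 1) = (n : ℝ) + 1 by ring]
    field_simp
  have H : ∀ x : ℝ, HasDerivAt (fM γ (n + 2))
      (-(x / (2 * ((((n : ℕ) + 2 : ℕ) : ℝ) - 1))) * fM γ (n + 2 - 1) x) x := by
    intro x
    rw [hB x]
    rcases lt_trichotomy x 0 with hx | hx | hx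
    · -- x < 0
      rw [show |x| = -x from abs_of_neg hx]
      have h0 : HasDerivAt (fun y : ℝ => g (-y))
          (-(c * γ ^ 2 * (-x) * Real.exp (-γ * (-x)) *
            ∑ l ∈ range (n + 1), Acoef n l * (γ * (-x)) ^ (n - l)) * (-1)) x :=
        (g_hasDeriv n γ c (-x)).comp x (hasDerivAt_neg x)
      have heq : fM γ (n + 2) =ᶠ[nhds x] fun y : ℝ => g (-y) := by
        filter_upwards [Iio_mem_nhds hx] with y hy
        rw [habs y, abs_of_neg hy]
      have h1 := h0.congr_of_eventuallyEq heq
      convert h1 using 1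
      · rfl
      · rfl
      ring
    · -- x = 0
      subst hx
      have hzero : HasDerivAt (fM γ (n + 2)) 0 0 := by
        have h0 : HasDerivAt g 0 0 := by
          have := g_hasDeriv n γ c 0
          convert this using 1
          ring
        rw [hasDerivAt_iff_isLittleO] at h0 ⊢
        simp only [sub_zero, smul_zero] at h0 ⊢
        have ht : Filter.Tendsto (fun y : ℝ => |y|) (nhds 0) (nhds (0 : ℝ)) := by
          simpa using continuous_abs.tendsto (0 : ℝ)
        have h1 := h0.comp_tendsto ht
        have h2 : (fun y : ℝ => |y|) =O[nhds (0 : ℝ)] fun y : ℝ => y := by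
          apply Asymptotics.isBigO_of_le
          intro y
          simp [Real.norm_eq_abs, abs_abs]
        have h3 := h1.trans_isBigO h2
        have heq : (fun y : ℝ => fM γ (n + 2) y - fM γ (n + 2) 0)
            = (fun u : ℝ => g u - g 0) ∘ fun y : ℝ => |y| := by
          funext y
          simp only [Function.comp]
          rw [habs y, habs 0, abs_zero]
        rw [heq]
        exact h3
      convert hzero using 1
      ring
    · -- x > 0
      rw [show |x| = x from abs_of_pos hx]
      have heq : fM γ (n + 2) =ᶠ[nhds x] g := by
        filter_upwards [Ioi_mem_nhds hx] with y hy
        rw [habs y, abs_of_pos hy]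
      exact (g_hasDeriv n γ c x).congr_of_eventuallyEq heq
  exact ⟨fun x => (H x).differentiableAt, fun x => (H x).deriv⟩
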